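/- (Steinitz Lemma, dimension m, ℓ∞ norm.) Let v₁, ..., v_t ∈ ℝ^m satisfy ‖v_j‖∞ ≤ 1 for all j and v₁ + ... + v_t = 0. Then there exists a permutation π of {1,...,t} such that for every k ∈ {1,...,t}, ‖v_{π(1)} + ... + v_{π(k)}‖∞ ≤ m. -/

import Mathlib

open Finset

/-- Kernel direction: m+1 homogeneous equations in > m+1 unknowns have a
nonzero solution. -/
lemma steinitz_kernel {m t : ℕ} (v : Fin t → Fin m → ℝ) (F : Finset (Fin t))
    (hF : m + 1 < F.card) :
    ∃ d : Fin t → ℝ, (∀ i ∉ F, d i = 0) ∧ (∃ i ∈ F, d i ≠ 0) ∧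
      ∑ i ∈ F, d i = 0 ∧ ∀ c, ∑ i ∈ F, d i * v i c = 0 := by
  let Φ : ({ x // x ∈ F } → ℝ) →ₗ[ℝ] ((Fin m → ℝ) × ℝ) :=
    { toFun := fun k => (fun c => ∑ i, k i * v i.1 c, ∑ i, k i)
      map_add' := by
        intro x y
        ext c <;> simp [add_mul, Finset.sum_add_distrib]
      map_smul' := by
        intro r x
        ext c <;> simp [Finset.mul_sum, mul_assoc] }
  have hker : LinearMap.ker Φ ≠ ⊥ := by
    intro h
    have hinj : Function.Injective Φ := LinearMap.ker_eq_bot.mp h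
    have h1 := LinearMap.finrank_le_finrank_of_injective hinj
    have h2 : Module.finrank ℝ ({ x // x ∈ F } → ℝ) = F.card := by
      simp [Module.finrank_fintype_fun_eq_card]
    have h3 : Module.finrank ℝ ((Fin m → ℝ) × ℝ) = m + 1 := by
      simp [Module.finrank_fintype_fun_eq_card]
    omega
  obtain ⟨k, hk, hk0⟩ := Submodule.exists_mem_ne_zero_of_ne_bot hker
  rw [LinearMap.mem_ker] at hk
  have hk1 : ∀ c, ∑ i, k i * v i.1 c = 0 := by
    intro c
    have := congrFun (congrArg Prod.fst hk) c
    simpa [Φ] using this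
  have hk2 : ∑ i, k i = 0 := by
    have := congrArg Prod.snd hk
    simpa [Φ] using this
  classical
  set d : Fin t → ℝ := fun i => if h : i ∈ F then k ⟨i, h⟩ else 0 with hd
  have hdF : ∀ i : { x // x ∈ F }, d i.1 = k i := by
    intro i; simp [hd, i.2]
  refine ⟨d, ?_, ?_, ?_, ?_⟩
  · intro i hi; simp [hd, hi]
  · by_contra hcon
    push_neg at hcon
    apply hk0
    ext ⟨i, hi⟩
    have := hcon i hi
    rw [hdF ⟨i, hi⟩] at this
    simpa using this
  · rw [← Finset.sum_attach F d]
    rw [Finset.sum_congr rfl (fun i _ => hdF i)]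
    simpa using hk2
  · intro c
    rw [← Finset.sum_attach F (fun i => d i * v i c)]
    rw [Finset.sum_congr rfl (fun (i : { x // x ∈ F }) _ => by rw [hdF i])]
    simpa using hk1 c

lemma steinitz_reduce {m t : ℕ} (v : Fin t → Fin m → ℝ) (S : Finset (Fin t)) (s : ℝ)
    (n : ℕ) (lam : Fin t → ℝ)
    (hn : (S.filter (fun i => lam i ≠ 0 ∧ lam i ≠ 1)).card = n)
    (hb : ∀ i ∈ S, 0 ≤ lam i ∧ lam i ≤ 1)
    (hsum : ∑ i ∈ S, lam i = s)
    (hv : ∀ c, ∑ i ∈ S, lam i * v i c = 0) :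
    ∃ lam' : Fin t → ℝ,
      (∀ i ∈ S, 0 ≤ lam' i ∧ lam' i ≤ 1) ∧
      ∑ i ∈ S, lam' i = s ∧
      (∀ c, ∑ i ∈ S, lam' i * v i c = 0) ∧
      (S.filter (fun i => lam' i ≠ 0 ∧ lam' i ≠ 1)).card ≤ m + 1 := by
  induction n using Nat.strong_induction_on generalizing lam with
  | _ n IH =>
  by_cases hle : n ≤ m + 1
  · exact ⟨lam, hb, hsum, hv, hn ▸ hle⟩
  push_neg at hle
  set F := S.filter (fun i => lam i ≠ 0 ∧ lam i ≠ 1) with hFdef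
  have hFS : F ⊆ S := Finset.filter_subset _ _
  have hFfrac : ∀ i ∈ F, 0 < lam i ∧ lam i < 1 := by
    intro i hi
    rw [hFdef, Finset.mem_filter] at hi
    obtain ⟨hiS, h0, h1⟩ := hi
    obtain ⟨hb0, hb1⟩ := hb i hiS
    exact ⟨lt_of_le_of_ne hb0 (Ne.symm h0), lt_of_le_of_ne hb1 h1⟩
  obtain ⟨d, hd0, ⟨iw, hiwF, hiwne⟩, hdsum, hdv⟩ :=
    steinitz_kernel v F (by omega : m + 1 < F.card)
  set δ : Fin t → ℝ := fun i => if 0 < d i then (1 - lam i) / d i else lam i / (-(d i)) with hδ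
  set G := F.filter (fun i => d i ≠ 0) with hGdef
  have hGne : G.Nonempty := ⟨iw, by simp [hGdef, hiwF, hiwne]⟩
  have hδpos : ∀ i ∈ G, 0 < δ i := by
    intro i hi
    rw [hGdef, Finset.mem_filter] at hi
    obtain ⟨hiF, hdne⟩ := hi
    obtain ⟨h0, h1⟩ := hFfrac i hiF
    have hδi : δ i = if 0 < d i then (1 - lam i) / d i else lam i / (-(d i)) := rfl
    rw [hδi]
    rcases lt_or_gt_of_ne hdne with hneg | hpos
    · rw [if_neg (by linarith)]
      exact div_pos h0 (by linarith)
    · rw [if_pos hpos]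
      exact div_pos (by linarith) hpos
  obtain ⟨i0, hi0G, hi0min⟩ := Finset.exists_min_image G δ hGne
  set T := δ i0 with hT
  have hTpos : 0 < T := hδpos i0 hi0G
  set lam' : Fin t → ℝ := fun i => lam i + T * d i with hlam'
  -- outside F unchanged
  have hout : ∀ i ∉ F, lam' i = lam i := by
    intro i hi; simp [hlam', hd0 i hi]
  -- bounds
  have hb' : ∀ i ∈ S, 0 ≤ lam' i ∧ lam' i ≤ 1 := by
    intro i hiS
    by_cases hiF : i ∈ F
    · by_cases hdz : d i = 0
      · rw [hlam']; simp [hdz]; exact hb i hiS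
      · have hiG : i ∈ G := by simp [hGdef, hiF, hdz]
        obtain ⟨h0, h1⟩ := hFfrac i hiF
        have hmin := hi0min i hiG
        rcases lt_or_gt_of_ne hdz with hneg | hpos
        · have hδi : δ i = lam i / (-(d i)) := by
            show (if 0 < d i then (1 - lam i) / d i else lam i / (-(d i))) = _
            rw [if_neg (by linarith)]
          have : T * (-(d i)) ≤ lam i := by
            calc T * (-(d i)) ≤ δ i * (-(d i)) :=
                  mul_le_mul_of_nonneg_right hmin (by linarith)
              _ = lam i := by
                  rw [hδi]; exact div_mul_cancel₀ _ (by linarith : -(d i) ≠ 0)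
          have hlv : lam' i = lam i + T * d i := rfl
          constructor
          · rw [hlv]; nlinarith
          · rw [hlv]; nlinarith
        · have hδi : δ i = (1 - lam i) / d i := by
            show (if 0 < d i then (1 - lam i) / d i else lam i / (-(d i))) = _
            rw [if_pos hpos]
          have : T * d i ≤ 1 - lam i := by
            calc T * d i ≤ δ i * d i := mul_le_mul_of_nonneg_right hmin (le_of_lt hpos)
              _ = 1 - lam i := by
                  rw [hδi]; exact div_mul_cancel₀ _ (ne_of_gt hpos)
          have hlv : lam' i = lam i + T * d i := rfl
          constructor
          · rw [hlv]; nlinarith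
          · rw [hlv]; nlinarith
    · rw [hout i hiF]; exact hb i hiS
  -- i0 hits the boundary
  have hi0F : i0 ∈ F := (Finset.filter_subset _ _) hi0G
  have hi0d : d i0 ≠ 0 := by
    have := hi0G; rw [hGdef, Finset.mem_filter] at this; exact this.2
  have hi0bd : lam' i0 = 0 ∨ lam' i0 = 1 := by
    have hTval : T = if 0 < d i0 then (1 - lam i0) / d i0 else lam i0 / (-(d i0)) := rfl
    have hlv : lam' i0 = lam i0 + T * d i0 := rfl
    rcases lt_or_gt_of_ne hi0d with hneg | hpos
    · left
      rw [hlv, hTval, if_neg (by linarith)]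
      field_simp
      ring
    · right
      rw [hlv, hTval, if_pos hpos]
      field_simp
      ring
  -- sums preserved
  have hdsumS : ∑ i ∈ S, d i = 0 := by
    rw [← Finset.sum_subset hFS (fun i _ hi => hd0 i hi)]
    exact hdsum
  have hdvS : ∀ c, ∑ i ∈ S, d i * v i c = 0 := by
    intro c
    rw [← Finset.sum_subset hFS (fun i _ hi => by rw [hd0 i hi, zero_mul])]
    exact hdv c
  have hsum' : ∑ i ∈ S, lam' i = s := by
    rw [hlam']
    simp only
    rw [Finset.sum_add_distrib, ← Finset.mul_sum, hdsumS, hsum]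
    ring
  have hv' : ∀ c, ∑ i ∈ S, lam' i * v i c = 0 := by
    intro c
    rw [hlam']
    simp only [add_mul]
    rw [Finset.sum_add_distrib]
    have : ∑ i ∈ S, T * d i * v i c = T * ∑ i ∈ S, d i * v i c := by
      rw [Finset.mul_sum]; exact Finset.sum_congr rfl (fun i _ => by ring)
    rw [this, hdvS c, hv c]
    ring
  -- fractional count decreases
  have hsub : S.filter (fun i => lam' i ≠ 0 ∧ lam' i ≠ 1) ⊆ F.erase i0 := by
    intro i hi
    rw [Finset.mem_filter] at hi
    obtain ⟨hiS, hfr⟩ := hi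
    rw [Finset.mem_erase]
    constructor
    · rintro rfl
      rcases hi0bd with h | h
      · exact hfr.1 h
      · exact hfr.2 h
    · by_contra hiF
      rw [hout i hiF] at hfr
      have : i ∈ F := by
        rw [hFdef, Finset.mem_filter]; exact ⟨hiS, hfr⟩
      exact hiF this
  have hcard : (S.filter (fun i => lam' i ≠ 0 ∧ lam' i ≠ 1)).card < n := by
    calc (S.filter (fun i => lam' i ≠ 0 ∧ lam' i ≠ 1)).card ≤ (F.erase i0).card :=
          Finset.card_le_card hsub
      _ = F.card - 1 := Finset.card_erase_of_mem hi0F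
      _ < n := by omega
  exact IH _ hcard lam' rfl hb' hsum' hv'

lemma steinitz_erase {m t : ℕ} (v : Fin t → Fin m → ℝ) (S : Finset (Fin t))
    (hne : S.Nonempty)
    (lam : Fin t → ℝ) (hb : ∀ i ∈ S, 0 ≤ lam i ∧ lam i ≤ 1)
    (hsum : ∑ i ∈ S, lam i = max ((S.card : ℝ) - m) 0)
    (hv : ∀ c, ∑ i ∈ S, lam i * v i c = 0) :
    ∃ i ∈ S, ∃ lam' : Fin t → ℝ, (∀ j ∈ S.erase i, 0 ≤ lam' j ∧ lam' j ≤ 1) ∧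
      ∑ j ∈ S.erase i, lam' j = max (((S.erase i).card : ℝ) - m) 0 ∧
      ∀ c, ∑ j ∈ S.erase i, lam' j * v j c = 0 := by
  classical
  obtain ⟨i₁, hi₁⟩ := hne
  by_cases hk : S.card ≤ m + 1
  · -- trivial case: zero weights work after erasing
    refine ⟨i₁, hi₁, fun _ => 0, by simp, ?_, by simp⟩
    rw [Finset.card_erase_of_mem hi₁]
    have : ((S.card - 1 : ℕ) : ℝ) - m ≤ 0 := by
      have h1 : S.card - 1 ≤ m := by omega
      have h2 : ((S.card - 1 : ℕ) : ℝ) ≤ m := by exact_mod_cast h1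
      linarith
    simp [max_eq_right this]
  · push_neg at hk
    have hkm : (m : ℝ) + 2 ≤ (S.card : ℝ) := by exact_mod_cast hk
    set s : ℝ := (S.card : ℝ) - 1 - m with hs
    have hspos : 0 < s := by rw [hs]; linarith
    have hmax : max ((S.card : ℝ) - m) 0 = (S.card : ℝ) - m :=
      max_eq_left (by linarith)
    rw [hmax] at hsum
    have hden : (0:ℝ) < (S.card : ℝ) - m := by linarith
    -- scale down
    set r : ℝ := s / ((S.card : ℝ) - m) with hr
    have hr0 : 0 ≤ r := le_of_lt (div_pos hspos hden)
    have hr1 : r ≤ 1 := by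
      rw [hr, div_le_one hden]; linarith
    set lam₁ : Fin t → ℝ := fun i => r * lam i with hlam₁
    have hb₁ : ∀ i ∈ S, 0 ≤ lam₁ i ∧ lam₁ i ≤ 1 := by
      intro i hi
      obtain ⟨h0, h1⟩ := hb i hi
      constructor
      · exact mul_nonneg hr0 h0
      · calc r * lam i ≤ 1 * 1 := mul_le_mul hr1 h1 h0 zero_le_one
          _ = 1 := by ring
    have hsum₁ : ∑ i ∈ S, lam₁ i = s := by
      rw [hlam₁]
      simp only
      rw [← Finset.mul_sum, hsum, hr]
      field_simp
    have hv₁ : ∀ c, ∑ i ∈ S, lam₁ i * v i c = 0 := by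
      intro c
      have : ∑ i ∈ S, r * lam i * v i c = r * ∑ i ∈ S, lam i * v i c := by
        rw [Finset.mul_sum]; exact Finset.sum_congr rfl (fun i _ => by ring)
      rw [hlam₁]; simp only; rw [this, hv c, mul_zero]
    obtain ⟨lam₂, hb₂, hsum₂, hv₂, hfr₂⟩ :=
      steinitz_reduce v S s _ lam₁ rfl hb₁ hsum₁ hv₁
    -- a zero coordinate exists
    have hzero : ∃ i ∈ S, lam₂ i = 0 := by
      by_contra hz
      push_neg at hz
      set Fr := S.filter (fun i => lam₂ i ≠ 0 ∧ lam₂ i ≠ 1) with hFr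
      set On := S.filter (fun i => lam₂ i = 1) with hOn
      have hunion : S = Fr ∪ On := by
        ext i
        simp only [hFr, hOn, Finset.mem_union, Finset.mem_filter]
        constructor
        · intro hi
          by_cases h1 : lam₂ i = 1
          · exact Or.inr ⟨hi, h1⟩
          · exact Or.inl ⟨hi, hz i hi, h1⟩
        · rintro (⟨hi, _⟩ | ⟨hi, _⟩) <;> exact hi
      have hdisj : Disjoint Fr On := by
        rw [Finset.disjoint_left]
        intro i hiFr hiOn
        exact (Finset.mem_filter.mp hiFr).2.2 (Finset.mem_filter.mp hiOn).2
      have hsplit : ∑ i ∈ S, lam₂ i = ∑ i ∈ Fr, lam₂ i + ∑ i ∈ On, lam₂ i := by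
        rw [hunion]; exact Finset.sum_union hdisj
      have hOnsum : ∑ i ∈ On, lam₂ i = On.card := by
        rw [Finset.sum_congr rfl (fun i hi => (Finset.mem_filter.mp hi).2)]
        simp
        rfl
      have hcards : Fr.card + On.card = S.card := by
        rw [hunion, Finset.card_union_of_disjoint hdisj]
      have hFrsum_ub : ∑ i ∈ Fr, lam₂ i ≤ Fr.card := by
        calc ∑ i ∈ Fr, lam₂ i ≤ ∑ _i ∈ Fr, (1:ℝ) :=
            Finset.sum_le_sum (fun i hi => (hb₂ i (Finset.filter_subset _ _ hi)).2)
          _ = Fr.card := by simp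
      -- derive contradiction
      rcases Finset.eq_empty_or_nonempty Fr with hFre | hFrne
      · have : ∑ i ∈ Fr, lam₂ i = 0 := by rw [hFre]; simp
        have hcard0 : Fr.card = 0 := by rw [hFre]; simp
        have : s = (On.card : ℝ) := by
          rw [← hsum₂, hsplit, this, hOnsum]; ring
        have : s = (S.card : ℝ) := by
          rw [this]
          congr 1
          omega
        rw [hs] at this
        linarith
      · have hFrpos : 0 < ∑ i ∈ Fr, lam₂ i := by
          apply Finset.sum_pos _ hFrne
          intro i hi
          have hiS := Finset.filter_subset _ _ hi
          have h0 := (hb₂ i hiS).1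
          have hne0 := (Finset.mem_filter.mp hi).2.1
          exact lt_of_le_of_ne h0 (Ne.symm hne0)
        have hcast : (Fr.card : ℝ) + On.card = S.card := by exact_mod_cast hcards
        have hFrle : (Fr.card : ℝ) ≤ m + 1 := by exact_mod_cast hfr₂
        have : ∑ i ∈ Fr, lam₂ i = (Fr.card : ℝ) - (m + 1) := by
          have := hsum₂
          rw [hsplit, hOnsum] at this
          rw [hs] at this
          linarith
        linarith
    obtain ⟨i0, hi0S, hi00⟩ := hzero
    refine ⟨i0, hi0S, lam₂, ?_, ?_, ?_⟩
    · intro j hj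
      exact hb₂ j (Finset.mem_of_mem_erase hj)
    · rw [Finset.sum_erase _ hi00, hsum₂, Finset.card_erase_of_mem hi0S]
      have h1 : (1:ℕ) ≤ S.card := by omega
      have : ((S.card - 1 : ℕ) : ℝ) = (S.card : ℝ) - 1 := by
        push_cast [h1]; ring
      rw [this, hs]
      rw [max_eq_left (by linarith)]
    · intro c
      rw [Finset.sum_erase _ (by rw [hi00]; ring), hv₂ c]

/-- The key bound: a "good" finset has all its coordinate sums bounded by m. -/
lemma steinitz_bound {m t : ℕ} (v : Fin t → Fin m → ℝ) (hbv : ∀ j c, |v j c| ≤ 1)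
    (S : Finset (Fin t)) (lam : Fin t → ℝ)
    (hb : ∀ i ∈ S, 0 ≤ lam i ∧ lam i ≤ 1)
    (hsum : ∑ i ∈ S, lam i = max ((S.card : ℝ) - m) 0)
    (hv : ∀ c, ∑ i ∈ S, lam i * v i c = 0) (c : Fin m) :
    |∑ i ∈ S, v i c| ≤ m := by
  have key : ∑ i ∈ S, v i c = ∑ i ∈ S, (1 - lam i) * v i c := by
    rw [Finset.sum_congr rfl (fun i _ => by ring :
      ∀ i ∈ S, (1 - lam i) * v i c = v i c - lam i * v i c)]
    rw [Finset.sum_sub_distrib, hv c]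
    ring
  rw [key]
  calc |∑ i ∈ S, (1 - lam i) * v i c| ≤ ∑ i ∈ S, |(1 - lam i) * v i c| :=
        Finset.abs_sum_le_sum_abs _ _
    _ ≤ ∑ i ∈ S, (1 - lam i) := by
        apply Finset.sum_le_sum
        intro i hi
        rw [abs_mul]
        obtain ⟨h0, h1⟩ := hb i hi
        calc |1 - lam i| * |v i c| ≤ |1 - lam i| * 1 :=
              mul_le_mul_of_nonneg_left (hbv i c) (abs_nonneg _)
          _ = 1 - lam i := by rw [mul_one, abs_of_nonneg (by linarith)]
    _ = (S.card : ℝ) - ∑ i ∈ S, lam i := by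
        rw [Finset.sum_sub_distrib]; simp
    _ ≤ m := by
        rw [hsum]
        have : (S.card : ℝ) - m ≤ max ((S.card : ℝ) - m) 0 := le_max_left _ _
        linarith

lemma steinitz_list {m t : ℕ} (v : Fin t → Fin m → ℝ) (hbv : ∀ j c, |v j c| ≤ 1)
    (n : ℕ) (S : Finset (Fin t)) (hcard : S.card = n)
    (hgood : ∃ lam : Fin t → ℝ, (∀ i ∈ S, 0 ≤ lam i ∧ lam i ≤ 1) ∧
      ∑ i ∈ S, lam i = max ((S.card : ℝ) - m) 0 ∧
      ∀ c, ∑ i ∈ S, lam i * v i c = 0) :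
    ∃ l : List (Fin t), l.Nodup ∧ l.toFinset = S ∧
      ∀ k c, |((l.take k).map (fun i => v i c)).sum| ≤ m := by
  induction n generalizing S with
  | zero =>
    have hS : S = ∅ := Finset.card_eq_zero.mp hcard
    refine ⟨[], List.nodup_nil, by simp [hS], ?_⟩
    intro k c
    simp
  | succ n IH =>
    have hne : S.Nonempty := Finset.card_pos.mp (by omega)
    obtain ⟨lam, hb, hsum, hv⟩ := hgood
    obtain ⟨i0, hi0S, lam', hb', hsum', hv'⟩ := steinitz_erase v S hne lam hb hsum hv
    have hcard' : (S.erase i0).card = n := by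
      rw [Finset.card_erase_of_mem hi0S]; omega
    obtain ⟨l, hnd, htf, hpre⟩ := IH (S.erase i0) hcard' ⟨lam', hb', hsum', hv'⟩
    refine ⟨l ++ [i0], ?_, ?_, ?_⟩
    · rw [List.nodup_append]
      refine ⟨hnd, List.nodup_singleton i0, ?_⟩
      intro a ha b hb2
      rw [List.mem_singleton] at hb2; rw [hb2]; intro hb2
      have haS : a ∈ S.erase i0 := htf ▸ List.mem_toFinset.mpr ha
      exact (Finset.mem_erase.mp haS).1 hb2
    · rw [List.toFinset_append, htf]
      simp only [List.toFinset_cons, List.toFinset_nil, LawfulSingleton.insert_empty_eq]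
      ext a
      simp only [Finset.mem_union, Finset.mem_erase, Finset.mem_singleton]
      constructor
      · rintro (⟨_, h⟩ | rfl)
        · exact h
        · exact hi0S
      · intro h
        by_cases ha : a = i0
        · right; exact ha
        · left; exact ⟨ha, h⟩
    · intro k c
      by_cases hkl : k ≤ l.length
      · rw [List.take_append_of_le_length hkl]
        exact hpre k c
      · push_neg at hkl
        have : (l ++ [i0]).take k = l ++ [i0] := by
          apply List.take_of_length_le
          simp only [List.length_append, List.length_singleton]
          omega
        rw [this]
        have hfull : ((l ++ [i0]).map (fun i => v i c)).sum = ∑ i ∈ S, v i c := by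
          have hnd2 : (l ++ [i0]).Nodup := by
            rw [List.nodup_append]
            refine ⟨hnd, List.nodup_singleton i0, ?_⟩
            intro a ha b hb2
            rw [List.mem_singleton] at hb2; rw [hb2]; intro hb2
            have haS : a ∈ S.erase i0 := htf ▸ List.mem_toFinset.mpr ha
            exact (Finset.mem_erase.mp haS).1 hb2
          have htf2 : (l ++ [i0]).toFinset = S := by
            rw [List.toFinset_append, htf]
            simp only [List.toFinset_cons, List.toFinset_nil, LawfulSingleton.insert_empty_eq]
            ext a
            simp only [Finset.mem_union, Finset.mem_erase, Finset.mem_singleton]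
            constructor
            · rintro (⟨_, h⟩ | rfl)
              · exact h
              · exact hi0S
            · intro h
              by_cases ha : a = i0
              · right; exact ha
              · left; exact ⟨ha, h⟩
          rw [← htf2]
          exact (List.sum_toFinset _ hnd2).symm
        rw [hfull]
        exact steinitz_bound v hbv S lam hb hsum hv c

/-- Steinitz Lemma in dimension `m` for the ℓ∞ norm: if `t` vectors each with
ℓ∞ norm at most 1 sum to zero, they can be permuted so that every prefix sum
has ℓ∞ norm at most `m`. -/
theorem steinitz_lemma (m t : ℕ) (v : Fin t → Fin m → ℝ)
    (hb : ∀ j c, |v j c| ≤ 1) (hs : ∑ j, v j = 0) :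
    ∃ π : Equiv.Perm (Fin t), ∀ k : ℕ, k ≤ t → ∀ c : Fin m,
      |∑ j ∈ Finset.univ.filter (fun j : Fin t => (j : ℕ) < k), v (π j) c| ≤ m := by
  classical
  have hs' : ∀ c, ∑ j, v j c = 0 := by
    intro c
    have := congrFun hs c
    simpa using this
  have hgood : ∃ lam : Fin t → ℝ,
      (∀ i ∈ (univ : Finset (Fin t)), 0 ≤ lam i ∧ lam i ≤ 1) ∧
      ∑ i ∈ (univ : Finset (Fin t)), lam i
        = max (((univ : Finset (Fin t)).card : ℝ) - m) 0 ∧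
      ∀ c, ∑ i ∈ (univ : Finset (Fin t)), lam i * v i c = 0 := by
    by_cases htm : (t : ℝ) - m ≤ 0
    · exact ⟨fun _ => 0, by simp, by simp [Finset.card_univ, max_eq_right htm], by simp⟩
    · push_neg at htm
      have hm0 : (0:ℝ) ≤ m := Nat.cast_nonneg m
      have ht0 : (0:ℝ) < t := by linarith
      refine ⟨fun _ => ((t : ℝ) - m) / t, ?_, ?_, ?_⟩
      · intro i _
        constructor
        · apply div_nonneg (by linarith) (le_of_lt ht0)
        · rw [div_le_one ht0]; linarith
      · rw [Finset.sum_const, Finset.card_univ, Fintype.card_fin]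
        rw [max_eq_left (by linarith)]
        rw [nsmul_eq_mul]; field_simp
      · intro c
        simp only
        rw [← Finset.mul_sum, hs' c, mul_zero]
  obtain ⟨l, hnd, htf, hpre⟩ := steinitz_list v hb t univ (by simp) hgood
  have hlen : l.length = t := by
    have h := List.toFinset_card_of_nodup hnd
    rw [htf] at h
    simpa using h.symm
  have hinj : Function.Injective (fun j : Fin t => l.get (Fin.cast hlen.symm j)) := by
    apply Function.Injective.comp
    · exact List.nodup_iff_injective_get.mp hnd
    · exact Fin.cast_injective hlen.symm
  let π : Equiv.Perm (Fin t) :=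
    Equiv.ofBijective _ (Finite.injective_iff_bijective.mp hinj)
  have hπ : ∀ j : Fin t, π j = l.get (Fin.cast hlen.symm j) := fun j => rfl
  refine ⟨π, ?_⟩
  have key : ∀ k, k ≤ t → ∀ c, ∑ j ∈ univ.filter (fun j : Fin t => (j : ℕ) < k), v (π j) c
      = ((l.take k).map (fun i => v i c)).sum := by
    intro k
    induction k with
    | zero => intro _ c; simp
    | succ k IHk =>
      intro hk1 c
      have hkt : k < t := by omega
      have hfilter : univ.filter (fun j : Fin t => (j : ℕ) < k + 1)
          = insert (⟨k, hkt⟩ : Fin t) (univ.filter (fun j : Fin t => (j : ℕ) < k)) := by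
        ext j
        simp only [Finset.mem_insert, Finset.mem_filter, Finset.mem_univ, true_and]
        constructor
        · intro hj
          rcases Nat.lt_succ_iff_lt_or_eq.mp hj with h | h
          · exact Or.inr h
          · left; exact Fin.ext h
        · rintro (rfl | h)
          · exact Nat.lt_succ_self k
          · omega
      rw [hfilter, Finset.sum_insert (by simp)]
      rw [IHk (by omega) c]
      have htake : l.take (k + 1) = l.take k ++ [l.get ⟨k, by omega⟩] := by
        rw [List.take_succ]
        congr
        rw [List.getElem?_eq_getElem (by omega)]
        rfl
      rw [htake, List.map_append, List.sum_append]
      have : π ⟨k, hkt⟩ = l.get ⟨k, by omega⟩ := hπ _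
      rw [this]
      simp [add_comm]
  intro k hk c
  rw [key k hk c]
  exact hpre k c
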